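/- arXiv:2002.09677 — 2 statements merged into one kernel-verified Lean document; each statement's English description precedes it below -/
import Mathlib

section
/- Let (σ_m)_{m≥1} be a summable nonincreasing sequence of positive reals, N ≥ 2, and ε_m = σ_m p_N(σ^{¬m})/p_N(σ). Then ε_1 ≤ σ_N (1 + β_N), where β_N = min over M' ∈ {2,...,N} of [(N−M'+1)σ_N]^{-1} Σ_{m≥M'} σ_m. -/
open scoped BigOperators

/-- Elementary symmetric sum of order `N` of a sequence. -/
noncomputable def esymm (N : ℕ) (lam : ℕ → ℝ) : ℝ :=
  ∑' s : {s : Finset ℕ // s.card = N}, ∏ u ∈ s.1, lam u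

open ENNReal

namespace EpsAux


/-- ENNReal elementary symmetric sum. -/
noncomputable def E (N : ℕ) (f : ℕ → ℝ≥0∞) : ℝ≥0∞ :=
  ∑' s : {s : Finset ℕ // s.card = N}, ∏ u ∈ s.1, f u

lemma tsum_cond (a : ℕ) (N : ℕ) (G : Finset ℕ → ℝ≥0∞) :
    ∑' s : {s : Finset ℕ // s.card = N + 1}, (if a ∈ s.1 then G (s.1.erase a) else 0)
      = ∑' t : {t : Finset ℕ // t.card = N}, (if a ∈ t.1 then 0 else G t.1) := by
  classical
  have hnot : ∀ t : {t : Finset ℕ // t.card = N},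
      (if a ∈ t.1 then 0 else G t.1) ≠ 0 → a ∉ t.1 := by
    intro t ht hmem
    exact ht (if_pos hmem)
  refine tsum_eq_tsum_of_ne_zero_bij
    (g := fun t : {t : Finset ℕ // t.card = N} => if a ∈ t.1 then 0 else G t.1)
    (fun t => ⟨insert a t.1.1, by
      rw [Finset.card_insert_of_notMem (hnot t.1 t.2), t.1.2]⟩) ?_ ?_ ?_
  · intro t1 t2 h
    have h' : insert a t1.1.1 = insert a t2.1.1 := by
      exact Subtype.ext_iff.mp h
    have h'' : (insert a t1.1.1).erase a = (insert a t2.1.1).erase a := by rw [h']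
    rw [Finset.erase_insert (hnot t1.1 t1.2), Finset.erase_insert (hnot t2.1 t2.2)] at h''
    exact Subtype.ext (Subtype.ext h'')
  · intro s hs
    have hmem : a ∈ s.1 := by
      by_contra hc
      exact hs (if_neg hc)
    have hcard : (s.1.erase a).card = N := by
      rw [Finset.card_erase_of_mem hmem, s.2, Nat.add_sub_cancel]
    have hGne : G (s.1.erase a) ≠ 0 := by
      have h := Function.mem_support.mp hs
      simp only [hmem, if_true] at h
      exact h
    refine ⟨⟨⟨s.1.erase a, hcard⟩, ?_⟩, ?_⟩
    · rw [Function.mem_support, if_neg (Finset.notMem_erase a s.1)]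
      exact hGne
    · exact Subtype.ext (Finset.insert_erase hmem)
  · intro t
    have ha := hnot t.1 t.2
    show (if a ∈ insert a t.1.1 then G ((insert a t.1.1).erase a) else 0) = _
    rw [if_pos (Finset.mem_insert_self a t.1.1), Finset.erase_insert ha]
    show G t.1.1 = if a ∈ t.1.1 then 0 else G t.1.1
    rw [if_neg ha]

lemma E_split (N : ℕ) (f : ℕ → ℝ≥0∞) (a : ℕ) :
    E (N + 1) f = f a * E N (Function.update f a 0) + E (N + 1) (Function.update f a 0) := by
  classical
  have hterm : ∀ s : {s : Finset ℕ // s.card = N + 1},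
      ∏ u ∈ s.1, f u = (if a ∈ s.1 then f a * ∏ u ∈ s.1.erase a, f u else 0)
        + (if a ∈ s.1 then 0 else ∏ u ∈ s.1, f u) := by
    intro s
    by_cases h : a ∈ s.1
    · rw [if_pos h, if_pos h, add_zero, Finset.mul_prod_erase _ _ h]
    · rw [if_neg h, if_neg h, zero_add]
  have h1 : E (N + 1) f
      = (∑' s : {s : Finset ℕ // s.card = N + 1},
          (if a ∈ s.1 then f a * ∏ u ∈ s.1.erase a, f u else 0))
        + ∑' s : {s : Finset ℕ // s.card = N + 1},
          (if a ∈ s.1 then 0 else ∏ u ∈ s.1, f u) := by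
    rw [E, tsum_congr hterm, Summable.tsum_add ENNReal.summable ENNReal.summable]
  rw [h1]
  congr 1
  · have h2 : ∀ s : {s : Finset ℕ // s.card = N + 1},
        (if a ∈ s.1 then f a * ∏ u ∈ s.1.erase a, f u else 0)
          = f a * (if a ∈ s.1 then ∏ u ∈ s.1.erase a, f u else 0) := by
      intro s; by_cases h : a ∈ s.1 <;> simp [h]
    rw [tsum_congr h2, ENNReal.tsum_mul_left, tsum_cond a N (fun u => ∏ x ∈ u, f x)]
    congr 1
    apply tsum_congr
    intro t
    by_cases h : a ∈ t.1
    · rw [if_pos h]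
      exact (Finset.prod_eq_zero h (by simp)).symm
    · rw [if_neg h]
      refine Finset.prod_congr rfl fun u hu => ?_
      exact (Function.update_of_ne (by rintro rfl; exact h hu) _ _).symm
  · apply tsum_congr
    intro s
    by_cases h : a ∈ s.1
    · rw [if_pos h]
      exact (Finset.prod_eq_zero h (by simp)).symm
    · rw [if_neg h]
      refine Finset.prod_congr rfl fun u hu => ?_
      exact (Function.update_of_ne (by rintro rfl; exact h hu) _ _).symm

lemma E_mono {N : ℕ} {f g : ℕ → ℝ≥0∞} (h : ∀ i, f i ≤ g i) : E N f ≤ E N g :=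
  Summable.tsum_le_tsum (fun s => Finset.prod_le_prod' fun i _ => h i) ENNReal.summable ENNReal.summable

lemma E_zero (f : ℕ → ℝ≥0∞) : E 0 f = 1 := by
  haveI : Unique {s : Finset ℕ // s.card = 0} :=
    ⟨⟨⟨∅, Finset.card_empty⟩⟩, fun s => Subtype.ext (Finset.card_eq_zero.mp s.2)⟩
  rw [E, tsum_eq_single default (fun b hb => absurd (Unique.eq_default b) hb)]
  have h0 : (default : {s : Finset ℕ // s.card = 0}).1 = ∅ :=
    Finset.card_eq_zero.mp (default : {s : Finset ℕ // s.card = 0}).2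
  rw [h0]
  exact Finset.prod_empty

lemma E_le (N : ℕ) (f : ℕ → ℝ≥0∞) : E N f ≤ (∑' i, f i) ^ N := by
  induction N with
  | zero => simp [E_zero]
  | succ n ih =>
    have hne : ∀ s : {s : Finset ℕ // s.card = n + 1}, s.1.Nonempty := by
      intro s
      rw [← Finset.card_pos, s.2]; omega
    set ι : {s : Finset ℕ // s.card = n + 1} → ℕ × {t : Finset ℕ // t.card = n} :=
      fun s => (s.1.min' (hne s), ⟨s.1.erase (s.1.min' (hne s)), by
        rw [Finset.card_erase_of_mem (Finset.min'_mem _ _), s.2, Nat.add_sub_cancel]⟩) with hι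
    have hinj : Function.Injective ι := by
      intro s1 s2 h
      have h1 : s1.1.min' (hne s1) = s2.1.min' (hne s2) := congrArg Prod.fst h
      have h2 : s1.1.erase (s1.1.min' (hne s1)) = s2.1.erase (s2.1.min' (hne s2)) :=
        congrArg (fun p : ℕ × {t : Finset ℕ // t.card = n} => p.2.1) h
      apply Subtype.ext
      have h3 := Finset.insert_erase (Finset.min'_mem s1.1 (hne s1))
      rw [← h3, h2, h1, Finset.insert_erase (Finset.min'_mem s2.1 (hne s2))]
    calc E (n + 1) f
        = ∑' s : {s : Finset ℕ // s.card = n + 1},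
            (fun p : ℕ × {t : Finset ℕ // t.card = n} => f p.1 * ∏ u ∈ p.2.1, f u) (ι s) := by
          apply tsum_congr
          intro s
          exact (Finset.mul_prod_erase _ _ (Finset.min'_mem s.1 (hne s))).symm
      _ ≤ ∑' p : ℕ × {t : Finset ℕ // t.card = n}, f p.1 * ∏ u ∈ p.2.1, f u :=
          ENNReal.tsum_comp_le_tsum_of_injective hinj _
      _ = (∑' i, f i) * E n f := by
          rw [ENNReal.tsum_prod']
          simp_rw [ENNReal.tsum_mul_left]
          rw [ENNReal.tsum_mul_right]
          rfl
      _ ≤ (∑' i, f i) * (∑' i, f i) ^ n := mul_le_mul_right ih _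
      _ = (∑' i, f i) ^ (n + 1) := (pow_succ' _ _).symm

lemma E_GS (n r : ℕ) (f : ℕ → ℝ≥0∞) :
    ((n + 1 - r : ℕ) : ℝ≥0∞) * E (n + 1) f ≤ (∑' i, f (r + i)) * E n f := by
  classical
  have key : ∀ s : {s : Finset ℕ // s.card = n + 1},
      ((n + 1 - r : ℕ) : ℝ≥0∞) * ∏ u ∈ s.1, f u
        ≤ ∑ a ∈ s.1.filter (fun a => r ≤ a), f a * ∏ u ∈ s.1.erase a, f u := by
    intro s
    have hcard : n + 1 - r ≤ (s.1.filter (fun a => r ≤ a)).card := by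
      have h1 : (s.1.filter (fun a => ¬ r ≤ a)).card ≤ r := by
        have hsub : s.1.filter (fun a => ¬ r ≤ a) ⊆ Finset.range r := by
          intro x hx
          rw [Finset.mem_filter] at hx
          rw [Finset.mem_range]; omega
        calc (s.1.filter (fun a => ¬ r ≤ a)).card ≤ (Finset.range r).card :=
              Finset.card_le_card hsub
          _ = r := Finset.card_range r
      have h2 := Finset.card_filter_add_card_filter_not
        (s := s.1) (p := fun a => r ≤ a)
      rw [s.2] at h2
      omega
    calc ((n + 1 - r : ℕ) : ℝ≥0∞) * ∏ u ∈ s.1, f u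
        ≤ ((s.1.filter (fun a => r ≤ a)).card : ℝ≥0∞) * ∏ u ∈ s.1, f u :=
          mul_le_mul_left (Nat.cast_le.mpr hcard) _
      _ = ∑ a ∈ s.1.filter (fun a => r ≤ a), ∏ u ∈ s.1, f u := by
          rw [Finset.sum_const, nsmul_eq_mul]
      _ = ∑ a ∈ s.1.filter (fun a => r ≤ a), f a * ∏ u ∈ s.1.erase a, f u := by
          apply Finset.sum_congr rfl
          intro a ha
          exact (Finset.mul_prod_erase _ _ (Finset.mem_filter.mp ha).1).symm
  calc ((n + 1 - r : ℕ) : ℝ≥0∞) * E (n + 1) f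
      = ∑' s : {s : Finset ℕ // s.card = n + 1},
          ((n + 1 - r : ℕ) : ℝ≥0∞) * ∏ u ∈ s.1, f u := ENNReal.tsum_mul_left.symm
    _ ≤ ∑' s : {s : Finset ℕ // s.card = n + 1},
          ∑ a ∈ s.1.filter (fun a => r ≤ a), f a * ∏ u ∈ s.1.erase a, f u :=
        Summable.tsum_le_tsum key ENNReal.summable ENNReal.summable
    _ = ∑' s : {s : Finset ℕ // s.card = n + 1}, ∑' a : ℕ,
          (if a ∈ s.1 ∧ r ≤ a then f a * ∏ u ∈ s.1.erase a, f u else 0) := by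
        apply tsum_congr
        intro s
        rw [tsum_eq_sum (s := s.1.filter (fun a => r ≤ a)) ?_]
        · apply Finset.sum_congr rfl
          intro a ha
          rw [Finset.mem_filter] at ha
          rw [if_pos ha]
        · intro b hb
          rw [Finset.mem_filter] at hb
          rw [if_neg (by tauto)]
    _ = ∑' a : ℕ, ∑' s : {s : Finset ℕ // s.card = n + 1},
          (if a ∈ s.1 ∧ r ≤ a then f a * ∏ u ∈ s.1.erase a, f u else 0) := ENNReal.tsum_comm
    _ ≤ ∑' a : ℕ, (if r ≤ a then f a else 0) * E n f := by
        apply Summable.tsum_le_tsum _ ENNReal.summable ENNReal.summable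
        intro a
        by_cases hr : r ≤ a
        · have h3 : ∀ s : {s : Finset ℕ // s.card = n + 1},
              (if a ∈ s.1 ∧ r ≤ a then f a * ∏ u ∈ s.1.erase a, f u else 0)
                = f a * (if a ∈ s.1 then ∏ u ∈ s.1.erase a, f u else 0) := by
            intro s
            by_cases h : a ∈ s.1 <;> simp [h, hr]
          rw [tsum_congr h3, ENNReal.tsum_mul_left, if_pos hr,
            tsum_cond a n (fun u => ∏ x ∈ u, f x)]
          apply mul_le_mul_right
          apply Summable.tsum_le_tsum _ ENNReal.summable ENNReal.summable
          intro t
          by_cases h : a ∈ t.1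
          · rw [if_pos h]; exact zero_le
          · rw [if_neg h]
        · rw [if_neg hr, zero_mul]
          have h4 : ∀ s : {s : Finset ℕ // s.card = n + 1},
              (if a ∈ s.1 ∧ r ≤ a then f a * ∏ u ∈ s.1.erase a, f u else 0) = 0 := by
            intro s; rw [if_neg (by tauto)]
          rw [tsum_congr h4]
          simp
    _ = (∑' a : ℕ, if r ≤ a then f a else 0) * E n f := ENNReal.tsum_mul_right
    _ = (∑' i, f (r + i)) * E n f := by
        congr 1
        have hinj : Function.Injective (fun i : ℕ => r + i) := fun x y h => by
          simpa using h
        rw [← Function.Injective.tsum_eq hinj (f := fun a => if r ≤ a then f a else 0) ?_]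
        · apply tsum_congr
          intro i
          show (if r ≤ r + i then f (r + i) else 0) = f (r + i)
          rw [if_pos (Nat.le_add_right r i)]
        · intro x hx
          rw [Function.mem_support] at hx
          have hrx : r ≤ x := by by_contra hc; exact hx (if_neg hc)
          exact ⟨x - r, by show r + (x - r) = x; omega⟩


lemma esymm_eq_toReal (N : ℕ) (g : ℕ → ℝ) (hg : ∀ i, 0 ≤ g i) :
    esymm N g = (E N (fun i => ENNReal.ofReal (g i))).toReal := by
  rw [E, ENNReal.tsum_toReal_eq (fun s => ENNReal.prod_ne_top fun a _ => ENNReal.ofReal_ne_top)]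
  apply tsum_congr
  intro s
  rw [ENNReal.toReal_prod]
  exact Finset.prod_congr rfl fun u _ => (ENNReal.toReal_ofReal (hg u)).symm

end EpsAux

open EpsAux ENNReal

/-- For a summable nonincreasing positive sequence `σ` (indexed from `0`, the paper's `σ_m`
being `σ (m-1)`) and `N ≥ 2`, with `ε_m = σ_m p_N(σ^{¬m})/p_N(σ)`, one has
`ε_1 ≤ σ_N (1 + β_N)` where
`β_N = min_{M' ∈ [2:N]} [(N−M'+1) σ_N]⁻¹ Σ_{m ≥ M'} σ_m`. -/
theorem eps_one_bound (σ : ℕ → ℝ) (hpos : ∀ m, 0 < σ m) (hmono : Antitone σ)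
    (hsum : Summable σ) (N : ℕ) (hN : 2 ≤ N) :
    σ 0 * esymm N (Function.update σ 0 0) / esymm N σ ≤
      σ (N - 1) *
        (1 + Finset.inf' (Finset.Icc 2 N) (Finset.nonempty_Icc.mpr hN)
          (fun M' : ℕ =>
            (∑' i : ℕ, σ (M' - 1 + i)) / (((N - M' + 1 : ℕ) : ℝ) * σ (N - 1)))) := by
  classical
  obtain ⟨M, rfl⟩ : ∃ M, N = M + 2 := ⟨N - 2, by omega⟩
  have hσnn : ∀ i, 0 ≤ σ i := fun i => (hpos i).le
  obtain ⟨M', hM'mem, hmin⟩ := Finset.exists_mem_eq_inf' (Finset.nonempty_Icc.mpr hN)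
    (fun M' : ℕ => (∑' i : ℕ, σ (M' - 1 + i)) / (((M + 2 - M' + 1 : ℕ) : ℝ) * σ (M + 2 - 1)))
  rw [Finset.mem_Icc] at hM'mem
  rw [hmin]
  show σ 0 * esymm (M + 2) (Function.update σ 0 0) / esymm (M + 2) σ ≤
    σ (M + 1) * (1 + (∑' i : ℕ, σ (M' - 1 + i)) / (((M + 2 - M' + 1 : ℕ) : ℝ) * σ (M + 1)))
  set f : ℕ → ℝ≥0∞ := fun i => ENNReal.ofReal (σ i) with hfdef
  have hfne : (∑' i, f i) ≠ ⊤ := by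
    rw [hfdef, ← ENNReal.ofReal_tsum_of_nonneg hσnn hsum]
    exact ENNReal.ofReal_ne_top
  have hle_f : ∀ i, f i ≤ f i := fun i => le_rfl
  have hupd : ∀ (g : ℕ → ℝ≥0∞) (a : ℕ), (∀ i, g i ≤ f i) →
      ∀ i, Function.update g a 0 i ≤ f i := by
    intro g a hg i
    rcases eq_or_ne i a with rfl | h
    · rw [Function.update_self]; exact zero_le
    · rw [Function.update_of_ne h]; exact hg i
  have h1f : ∀ i, Function.update f 0 0 i ≤ f i := hupd f 0 hle_f
  have hCf : ∀ i, Function.update f (M + 1) 0 i ≤ f i := hupd f (M + 1) hle_f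
  have hτf : ∀ i, Function.update (Function.update f 0 0) (M + 1) 0 i ≤ f i :=
    hupd _ (M + 1) h1f
  have hfin : ∀ (n : ℕ) (g : ℕ → ℝ≥0∞), (∀ i, g i ≤ f i) → E n g ≠ ⊤ := fun n g hg =>
    ne_top_of_le_ne_top (ENNReal.pow_ne_top hfne) ((E_mono hg).trans (E_le n f))
  have hAfin := hfin (M + 2) f hle_f
  have hBfin := hfin (M + 2) _ h1f
  have hCfin := hfin (M + 2) _ hCf
  have hDfin := hfin (M + 1) _ hτf
  have hEfin := hfin (M + 2) _ hτf
  -- splitting identities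
  have hB : E (M + 2) (Function.update f 0 0)
      = f (M + 1) * E (M + 1) (Function.update (Function.update f 0 0) (M + 1) 0)
        + E (M + 2) (Function.update (Function.update f 0 0) (M + 1) 0) := by
    have h := E_split (M + 1) (Function.update f 0 0) (M + 1)
    rwa [Function.update_of_ne (show (M + 1 : ℕ) ≠ 0 by omega) 0 f] at h
  have hC : E (M + 2) (Function.update f (M + 1) 0)
      = f 0 * E (M + 1) (Function.update (Function.update f 0 0) (M + 1) 0)
        + E (M + 2) (Function.update (Function.update f 0 0) (M + 1) 0) := by
    have h := E_split (M + 1) (Function.update f (M + 1) 0) 0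
    rwa [Function.update_of_ne (show (0 : ℕ) ≠ M + 1 by omega) 0 f,
      ← Function.update_comm (show (0 : ℕ) ≠ M + 1 by omega) 0 0 f] at h
  -- Guruswami–Sinop type bound
  have hGS := E_GS (M + 1) (M' - 1) (Function.update (Function.update f 0 0) (M + 1) 0)
  have hkeq : M + 1 + 1 - (M' - 1) = M + 2 - M' + 1 := by omega
  rw [hkeq] at hGS
  have htnn : (0 : ℝ) ≤ ∑' i : ℕ, σ (M' - 1 + i) := tsum_nonneg fun i => hσnn _
  have htail : (∑' i, Function.update (Function.update f 0 0) (M + 1) 0 (M' - 1 + i))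
      ≤ ENNReal.ofReal (∑' i : ℕ, σ (M' - 1 + i)) := by
    rw [ENNReal.ofReal_tsum_of_nonneg (fun i => hσnn _)
      (hsum.comp_injective (fun x y h => Nat.add_left_cancel h))]
    exact Summable.tsum_le_tsum (fun i => hτf _) ENNReal.summable ENNReal.summable
  have hGS2 : ((M + 2 - M' + 1 : ℕ) : ℝ≥0∞)
        * E (M + 2) (Function.update (Function.update f 0 0) (M + 1) 0)
      ≤ ENNReal.ofReal (∑' i : ℕ, σ (M' - 1 + i))
        * E (M + 1) (Function.update (Function.update f 0 0) (M + 1) 0) :=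
    hGS.trans (mul_le_mul_left htail _)
  -- positivity
  have hApos : E (M + 2) f ≠ 0 := by
    intro h0
    have hle := ENNReal.le_tsum
      (f := fun s : {s : Finset ℕ // s.card = M + 2} => ∏ u ∈ s.1, f u)
      ⟨Finset.range (M + 2), Finset.card_range _⟩
    rw [← E, h0] at hle
    have hz : ∏ u ∈ Finset.range (M + 2), f u = 0 := le_antisymm hle (zero_le)
    rw [Finset.prod_eq_zero_iff] at hz
    obtain ⟨u, _, hu⟩ := hz
    exact (ENNReal.ofReal_pos.mpr (hpos u)).ne' hu
  have hDpos : E (M + 1) (Function.update (Function.update f 0 0) (M + 1) 0) ≠ 0 := by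
    intro h0
    have hcard : ((Finset.range (M + 1)).image (fun i => i + (M + 2))).card = M + 1 := by
      rw [Finset.card_image_of_injective _ (fun x y h => by omega), Finset.card_range]
    have hle := ENNReal.le_tsum
      (f := fun s : {s : Finset ℕ // s.card = M + 1} => ∏ u ∈ s.1,
        Function.update (Function.update f 0 0) (M + 1) 0 u)
      ⟨_, hcard⟩
    rw [← E, h0] at hle
    have hz : ∏ u ∈ (Finset.range (M + 1)).image (fun i => i + (M + 2)),
        Function.update (Function.update f 0 0) (M + 1) 0 u = 0 :=
      le_antisymm hle (zero_le)
    rw [Finset.prod_eq_zero_iff] at hz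
    obtain ⟨u, humem, hu⟩ := hz
    rw [Finset.mem_image] at humem
    obtain ⟨i, _, rfl⟩ := humem
    rw [Function.update_of_ne (by omega), Function.update_of_ne (by omega)] at hu
    exact (ENNReal.ofReal_pos.mpr (hpos _)).ne' hu
  -- pass to reals
  have hσ0nn : ∀ i, 0 ≤ Function.update σ 0 0 i := by
    intro i
    rcases eq_or_ne i 0 with rfl | h
    · rw [Function.update_self]
    · rw [Function.update_of_ne h]; exact hσnn i
  have hup0 : (fun i => ENNReal.ofReal (Function.update σ 0 0 i)) = Function.update f 0 0 := by
    funext i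
    rcases eq_or_ne i 0 with rfl | h
    · simp
    · rw [Function.update_of_ne h, Function.update_of_ne h]
  rw [esymm_eq_toReal (M + 2) σ hσnn, esymm_eq_toReal (M + 2) _ hσ0nn, hup0, ← hfdef]
  have hfM1 : f (M + 1) = ENNReal.ofReal (σ (M + 1)) := rfl
  have hf0 : f 0 = ENNReal.ofReal (σ 0) := rfl
  have hBr : (E (M + 2) (Function.update f 0 0)).toReal
      = σ (M + 1) * (E (M + 1) (Function.update (Function.update f 0 0) (M + 1) 0)).toReal
        + (E (M + 2) (Function.update (Function.update f 0 0) (M + 1) 0)).toReal := by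
    rw [hB, ENNReal.toReal_add (ENNReal.mul_ne_top (hfM1 ▸ ENNReal.ofReal_ne_top) hDfin) hEfin,
      ENNReal.toReal_mul, hfM1, ENNReal.toReal_ofReal (hσnn (M + 1))]
  have hCr : (E (M + 2) (Function.update f (M + 1) 0)).toReal
      = σ 0 * (E (M + 1) (Function.update (Function.update f 0 0) (M + 1) 0)).toReal
        + (E (M + 2) (Function.update (Function.update f 0 0) (M + 1) 0)).toReal := by
    rw [hC, ENNReal.toReal_add (ENNReal.mul_ne_top (hf0 ▸ ENNReal.ofReal_ne_top) hDfin) hEfin,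
      ENNReal.toReal_mul, hf0, ENNReal.toReal_ofReal (hσnn 0)]
  have hGSr : ((M + 2 - M' + 1 : ℕ) : ℝ)
        * (E (M + 2) (Function.update (Function.update f 0 0) (M + 1) 0)).toReal
      ≤ (∑' i : ℕ, σ (M' - 1 + i))
        * (E (M + 1) (Function.update (Function.update f 0 0) (M + 1) 0)).toReal := by
    have h := (ENNReal.toReal_le_toReal
      (ENNReal.mul_ne_top (ENNReal.natCast_ne_top _) hEfin)
      (ENNReal.mul_ne_top ENNReal.ofReal_ne_top hDfin)).mpr hGS2
    rwa [ENNReal.toReal_mul, ENNReal.toReal_mul, ENNReal.toReal_natCast,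
      ENNReal.toReal_ofReal htnn] at h
  have hCAr : (E (M + 2) (Function.update f (M + 1) 0)).toReal ≤ (E (M + 2) f).toReal :=
    (ENNReal.toReal_le_toReal hCfin hAfin).mpr (E_mono hCf)
  have hApos_r : 0 < (E (M + 2) f).toReal := ENNReal.toReal_pos hApos hAfin
  have hDpos_r : 0 <
      (E (M + 1) (Function.update (Function.update f 0 0) (M + 1) 0)).toReal :=
    ENNReal.toReal_pos hDpos hDfin
  have hEnn : 0 ≤ (E (M + 2) (Function.update (Function.update f 0 0) (M + 1) 0)).toReal :=
    ENNReal.toReal_nonneg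
  -- final algebra
  set A := (E (M + 2) f).toReal
  set B := (E (M + 2) (Function.update f 0 0)).toReal
  set C := (E (M + 2) (Function.update f (M + 1) 0)).toReal
  set D := (E (M + 1) (Function.update (Function.update f 0 0) (M + 1) 0)).toReal
  set Ee := (E (M + 2) (Function.update (Function.update f 0 0) (M + 1) 0)).toReal
  set t := ∑' i : ℕ, σ (M' - 1 + i) with htdef
  have hkpos : (0 : ℝ) < ((M + 2 - M' + 1 : ℕ) : ℝ) := by
    have : 0 < M + 2 - M' + 1 := by omega
    exact_mod_cast this
  set k : ℝ := ((M + 2 - M' + 1 : ℕ) : ℝ) with hkdef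
  have hσM1 := hpos (M + 1)
  have hRHS : σ (M + 1) * (1 + t / (k * σ (M + 1))) = σ (M + 1) + t / k := by
    field_simp
  rw [hRHS, div_le_iff₀ hApos_r]
  have hqnn : 0 ≤ t / k := div_nonneg htnn hkpos.le
  have hkey : σ 0 * Ee ≤ t / k * (σ 0 * D) := by
    rw [div_mul_eq_mul_div, le_div_iff₀ hkpos]
    nlinarith [mul_le_mul_of_nonneg_left hGSr (hσnn 0)]
  calc σ 0 * B = σ 0 * σ (M + 1) * D + σ 0 * Ee := by rw [hBr]; ring
    _ ≤ σ 0 * σ (M + 1) * D + t / k * (σ 0 * D) := by linarith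
    _ ≤ (σ (M + 1) + t / k) * C := by
        rw [hCr]
        nlinarith [mul_nonneg hσM1.le hEnn, mul_nonneg hqnn hEnn]
    _ ≤ (σ (M + 1) + t / k) * A :=
        mul_le_mul_of_nonneg_left hCAr (add_nonneg hσM1.le hqnn)
end

section
/- Under continuous volume sampling with N nodes for a Mercer kernel with summable nonincreasing positive eigenvalues (σ_m), let τ_m = Σ_{U:|U|=N, m∈U} Π_{u∈U}σ_u / Σ_{U:|U|=N} Π_{u∈U}σ_u. Then for every m ≥ 1, σ_m(1 − τ_m) ≤ σ_N(1 + β_N) ≤ σ_N + Σ_{n≥N} σ_n, and consequently for each fixed m, τ_m → 1 as N → ∞. -/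
open scoped BigOperators

/-- Sum over `N`-element subsets containing a fixed index `m`. -/
noncomputable def esymmMem (N m : ℕ) (lam : ℕ → ℝ) : ℝ :=
  ∑' s : {s : Finset ℕ // s.card = N ∧ m ∈ s}, ∏ u ∈ s.1, lam u

namespace LvAux

open ENNReal Filter

noncomputable def gE (σ : ℕ → ℝ) (u : ℕ) : ℝ≥0∞ := ENNReal.ofReal (σ u)
noncomputable def PE (σ : ℕ → ℝ) (s : Finset ℕ) : ℝ≥0∞ := ∏ u ∈ s, gE σ u
noncomputable def AE (σ : ℕ → ℝ) (N : ℕ) : ℝ≥0∞ :=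
  ∑' s : {s : Finset ℕ // s.card = N}, PE σ s.1
noncomputable def BE (σ : ℕ → ℝ) (N m : ℕ) : ℝ≥0∞ :=
  ∑' s : {s : Finset ℕ // s.card = N ∧ m ∈ s}, PE σ s.1
noncomputable def CE (σ : ℕ → ℝ) (N m : ℕ) : ℝ≥0∞ :=
  ∑' s : {s : Finset ℕ // s.card = N ∧ m ∉ s}, PE σ s.1
noncomputable def TE (σ : ℕ → ℝ) (K : ℕ) : ℝ≥0∞ := ∑' i : ℕ, gE σ (K + i)

variable {σ : ℕ → ℝ}

lemma PE_ne_top (σ : ℕ → ℝ) (s : Finset ℕ) : PE σ s ≠ ⊤ :=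
  (ENNReal.prod_lt_top (fun _ _ => ENNReal.ofReal_lt_top)).ne

lemma tsum_gE_ne_top (hnn : ∀ u, 0 ≤ σ u) (hsum : Summable σ) : (∑' u, gE σ u) ≠ ⊤ := by
  rw [show (∑' u, gE σ u) = ENNReal.ofReal (∑' u, σ u) from
    (ENNReal.ofReal_tsum_of_nonneg hnn hsum).symm]
  exact ENNReal.ofReal_ne_top

lemma TE_eq (hnn : ∀ u, 0 ≤ σ u) (hsum : Summable σ) (K : ℕ) :
    TE σ K = ENNReal.ofReal (∑' i, σ (K + i)) := by
  have hs : Summable (fun i => σ (K + i)) :=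
    hsum.comp_injective (fun a b h => by omega)
  rw [TE, ENNReal.ofReal_tsum_of_nonneg (fun i => hnn _) hs]
  rfl

lemma AE_zero (σ : ℕ → ℝ) : AE σ 0 = 1 := by
  rw [AE, tsum_eq_single (⟨∅, Finset.card_empty⟩ : {s : Finset ℕ // s.card = 0})]
  · simp [PE]
  · rintro ⟨s, hs⟩ hne
    exact absurd (Subtype.ext (Finset.card_eq_zero.mp hs)) hne

lemma AE_succ_le (σ : ℕ → ℝ) (N : ℕ) : AE σ (N + 1) ≤ (∑' u, gE σ u) * AE σ N := by
  classical
  have hne : ∀ s : {s : Finset ℕ // s.card = N + 1}, s.1.Nonempty := fun s =>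
    Finset.card_pos.mp (by rw [s.2]; omega)
  have hj : ∀ s : {s : Finset ℕ // s.card = N + 1},
      (s.1.erase (s.1.min' (hne s))).card = N := fun s => by
    rw [Finset.card_erase_of_mem (Finset.min'_mem _ _), s.2]; omega
  let j : {s : Finset ℕ // s.card = N + 1} → ℕ × {t : Finset ℕ // t.card = N} :=
    fun s => (s.1.min' (hne s), ⟨s.1.erase (s.1.min' (hne s)), hj s⟩)
  have hinj : Function.Injective j := by
    rintro ⟨s, hs⟩ ⟨s', hs'⟩ h
    simp only [j, Prod.mk.injEq, Subtype.mk.injEq] at h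
    apply Subtype.ext
    show s = s'
    calc s = insert (s.min' (hne ⟨s, hs⟩)) (s.erase (s.min' (hne ⟨s, hs⟩))) :=
          (Finset.insert_erase (Finset.min'_mem s (hne ⟨s, hs⟩))).symm
      _ = insert (s'.min' (hne ⟨s', hs'⟩)) (s'.erase (s'.min' (hne ⟨s', hs'⟩))) := by
          rw [h.2, h.1]
      _ = s' := Finset.insert_erase (Finset.min'_mem s' (hne ⟨s', hs'⟩))
  have key := ENNReal.tsum_comp_le_tsum_of_injective hinj
    (fun q : ℕ × {t : Finset ℕ // t.card = N} => gE σ q.1 * PE σ q.2.1)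
  calc AE σ (N + 1)
      = ∑' s : {s : Finset ℕ // s.card = N + 1}, gE σ ((j s).1) * PE σ ((j s).2.1) := by
        refine tsum_congr fun s => ?_
        exact (Finset.mul_prod_erase s.1 (gE σ) (Finset.min'_mem _ _)).symm
    _ ≤ ∑' q : ℕ × {t : Finset ℕ // t.card = N}, gE σ q.1 * PE σ q.2.1 := key
    _ = (∑' u, gE σ u) * AE σ N := by
        rw [ENNReal.tsum_prod']
        calc (∑' a, ∑' b : {t : Finset ℕ // t.card = N}, gE σ a * PE σ b.1)
            = ∑' a, gE σ a * AE σ N := tsum_congr fun a => ENNReal.tsum_mul_left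
          _ = (∑' u, gE σ u) * AE σ N := ENNReal.tsum_mul_right

lemma AE_ne_top (hnn : ∀ u, 0 ≤ σ u) (hsum : Summable σ) : ∀ N, AE σ N ≠ ⊤ := by
  intro N
  induction N with
  | zero => rw [AE_zero]; exact ENNReal.one_ne_top
  | succ n ih =>
    exact ne_top_of_le_ne_top (ENNReal.mul_ne_top (tsum_gE_ne_top hnn hsum) ih)
      (AE_succ_le σ n)

lemma BE_le_AE (σ : ℕ → ℝ) (N m : ℕ) : BE σ N m ≤ AE σ N :=
  ENNReal.tsum_comp_le_tsum_of_injective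
    (f := fun s : {s : Finset ℕ // s.card = N ∧ m ∈ s} =>
      (⟨s.1, s.2.1⟩ : {s : Finset ℕ // s.card = N}))
    (by rintro ⟨s, hs⟩ ⟨s', hs'⟩ h
        simp only [Subtype.mk.injEq] at h
        exact Subtype.ext h) (fun s => PE σ s.1)

lemma CE_le_AE (σ : ℕ → ℝ) (N m : ℕ) : CE σ N m ≤ AE σ N :=
  ENNReal.tsum_comp_le_tsum_of_injective
    (f := fun s : {s : Finset ℕ // s.card = N ∧ m ∉ s} =>
      (⟨s.1, s.2.1⟩ : {s : Finset ℕ // s.card = N}))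
    (by rintro ⟨s, hs⟩ ⟨s', hs'⟩ h
        simp only [Subtype.mk.injEq] at h
        exact Subtype.ext h) (fun s => PE σ s.1)

lemma AE_split (σ : ℕ → ℝ) (N m : ℕ) : AE σ N = BE σ N m + CE σ N m := by
  classical
  have h1 : AE σ N = ∑' s : Finset ℕ, Set.indicator {s : Finset ℕ | s.card = N} (PE σ) s :=
    tsum_subtype _ _
  have h2 : BE σ N m
      = ∑' s : Finset ℕ, Set.indicator {s : Finset ℕ | s.card = N ∧ m ∈ s} (PE σ) s :=
    tsum_subtype _ _
  have h3 : CE σ N m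
      = ∑' s : Finset ℕ, Set.indicator {s : Finset ℕ | s.card = N ∧ m ∉ s} (PE σ) s :=
    tsum_subtype _ _
  rw [h1, h2, h3, ← ENNReal.tsum_add]
  refine tsum_congr fun s => ?_
  by_cases hc : s.card = N <;> by_cases hm : m ∈ s <;>
    simp [Set.indicator, hc, hm]

lemma BE_eq (σ : ℕ → ℝ) (N m : ℕ) (hN : 1 ≤ N) :
    BE σ N m = gE σ m * CE σ (N - 1) m := by
  classical
  let e : {s : Finset ℕ // s.card = N ∧ m ∈ s} ≃ {t : Finset ℕ // t.card = N - 1 ∧ m ∉ t} :=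
    { toFun := fun s => ⟨s.1.erase m,
        by rw [Finset.card_erase_of_mem s.2.2, s.2.1], Finset.notMem_erase m s.1⟩
      invFun := fun t => ⟨insert m t.1,
        by rw [Finset.card_insert_of_notMem t.2.2, t.2.1]; omega, Finset.mem_insert_self m t.1⟩
      left_inv := fun s => Subtype.ext (Finset.insert_erase s.2.2)
      right_inv := fun t => Subtype.ext (Finset.erase_insert t.2.2) }
  rw [BE, ← e.symm.tsum_eq (fun s => PE σ s.1)]
  have hpt : ∀ t : {t : Finset ℕ // t.card = N - 1 ∧ m ∉ t},
      PE σ ((e.symm t).1) = gE σ m * PE σ t.1 := by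
    intro t
    show PE σ (insert m t.1) = gE σ m * PE σ t.1
    rw [PE, Finset.prod_insert t.2.2]
    rfl
  exact (tsum_congr hpt).trans ENNReal.tsum_mul_left

lemma AE_ne_zero (hpos : ∀ u, 0 < σ u) (N : ℕ) : AE σ N ≠ 0 := by
  have h : PE σ (Finset.range N) ≤ AE σ N :=
    ENNReal.le_tsum (⟨Finset.range N, Finset.card_range N⟩ : {s : Finset ℕ // s.card = N})
  have hp : 0 < PE σ (Finset.range N) := by
    rw [PE]
    exact CanonicallyOrderedAdd.prod_pos.mpr
      (fun u _ => ENNReal.ofReal_pos.mpr (hpos u))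
  exact (lt_of_lt_of_le hp h).ne'

lemma CE_step (σ : ℕ → ℝ) (m N K : ℕ) :
    ((N - K : ℕ) : ℝ≥0∞) * CE σ N m ≤ TE σ K * CE σ (N - 1) m := by
  classical
  -- pointwise counting bound
  have step1 : ∀ s : {s : Finset ℕ // s.card = N ∧ m ∉ s},
      ((N - K : ℕ) : ℝ≥0∞) * PE σ s.1 ≤
        ∑ u ∈ s.1.filter (fun u => K ≤ u), gE σ u * PE σ (s.1.erase u) := by
    rintro ⟨s, hs, hm⟩
    have hcard : (N - K : ℕ) ≤ (s.filter (fun u => K ≤ u)).card := by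
      have h1 : (s.filter (fun u => ¬ K ≤ u)).card ≤ K := by
        calc (s.filter (fun u => ¬ K ≤ u)).card ≤ (Finset.range K).card := by
              refine Finset.card_le_card fun u hu => ?_
              simp only [Finset.mem_filter, not_le] at hu
              exact Finset.mem_range.mpr hu.2
          _ = K := Finset.card_range K
      have h2 := Finset.card_filter_add_card_filter_not
        (s := s) (p := fun u => K ≤ u)
      omega
    calc ((N - K : ℕ) : ℝ≥0∞) * PE σ s
        ≤ ((s.filter (fun u => K ≤ u)).card : ℝ≥0∞) * PE σ s := by
          exact mul_le_mul_left (by exact_mod_cast hcard) _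
      _ = ∑ u ∈ s.filter (fun u => K ≤ u), PE σ s := by
          rw [Finset.sum_const, nsmul_eq_mul]
      _ = ∑ u ∈ s.filter (fun u => K ≤ u), gE σ u * PE σ (s.erase u) :=
          Finset.sum_congr rfl fun u hu =>
            (Finset.mul_prod_erase s (gE σ) (Finset.mem_of_mem_filter u hu)).symm
  have step2 : ((N - K : ℕ) : ℝ≥0∞) * CE σ N m ≤
      ∑' s : {s : Finset ℕ // s.card = N ∧ m ∉ s},
        ∑' u : {u : ℕ // u ∈ s.1.filter (fun u => K ≤ u)},
          gE σ u.1 * PE σ (s.1.erase u.1) := by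
    rw [CE, ← ENNReal.tsum_mul_left]
    refine ENNReal.tsum_le_tsum fun s => ?_
    rw [Finset.tsum_subtype (s.1.filter (fun u => K ≤ u))
      (fun u => gE σ u * PE σ (s.1.erase u))]
    exact step1 s
  -- reindex as a sigma type and inject into a product
  have hsig : (∑' s : {s : Finset ℕ // s.card = N ∧ m ∉ s},
        ∑' u : {u : ℕ // u ∈ s.1.filter (fun u => K ≤ u)},
          gE σ u.1 * PE σ (s.1.erase u.1))
      = ∑' p : (Σ s : {s : Finset ℕ // s.card = N ∧ m ∉ s},
          {u : ℕ // u ∈ s.1.filter (fun u => K ≤ u)}),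
          gE σ p.2.1 * PE σ (p.1.1.erase p.2.1) :=
    (ENNReal.tsum_sigma (fun (s : {s : Finset ℕ // s.card = N ∧ m ∉ s})
      (u : {u : ℕ // u ∈ s.1.filter (fun u => K ≤ u)}) =>
        gE σ u.1 * PE σ (s.1.erase u.1))).symm
  let j : (Σ s : {s : Finset ℕ // s.card = N ∧ m ∉ s},
      {u : ℕ // u ∈ s.1.filter (fun u => K ≤ u)}) →
      {u : ℕ // K ≤ u} × {t : Finset ℕ // t.card = N - 1 ∧ m ∉ t} :=
    fun p => (⟨p.2.1, (Finset.mem_filter.mp p.2.2).2⟩,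
      ⟨p.1.1.erase p.2.1,
        by rw [Finset.card_erase_of_mem (Finset.mem_filter.mp p.2.2).1, p.1.2.1],
        fun h => p.1.2.2 (Finset.mem_of_mem_erase h)⟩)
  have hinj : Function.Injective j := by
    rintro ⟨⟨s, hs⟩, ⟨u, hu⟩⟩ ⟨⟨s', hs'⟩, ⟨u', hu'⟩⟩ h
    simp only [j, Prod.mk.injEq, Subtype.mk.injEq] at h
    obtain ⟨hu_eq, he⟩ := h
    subst hu_eq
    have hu1 : u ∈ s := (Finset.mem_filter.mp hu).1
    have hu1' : u ∈ s' := (Finset.mem_filter.mp hu').1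
    have hss : s = s' := by
      rw [← Finset.insert_erase hu1, ← Finset.insert_erase hu1', he]
    subst hss
    rfl
  have hcomp := ENNReal.tsum_comp_le_tsum_of_injective hinj
    (fun q : {u : ℕ // K ≤ u} × {t : Finset ℕ // t.card = N - 1 ∧ m ∉ t} =>
      gE σ q.1.1 * PE σ q.2.1)
  have hprod : (∑' q : {u : ℕ // K ≤ u} × {t : Finset ℕ // t.card = N - 1 ∧ m ∉ t},
      gE σ q.1.1 * PE σ q.2.1) = TE σ K * CE σ (N - 1) m := by
    rw [ENNReal.tsum_prod']
    have hge : (∑' a : {u : ℕ // K ≤ u}, gE σ a.1) = TE σ K := by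
      rw [TE, ← Equiv.tsum_eq
        (⟨fun i => ⟨K + i, Nat.le_add_right K i⟩, fun u => u.1 - K,
          fun i => by simp, fun u => Subtype.ext (Nat.add_sub_cancel' u.2)⟩ :
            ℕ ≃ {u : ℕ // K ≤ u})
        (fun u : {u : ℕ // K ≤ u} => gE σ u.1)]
      exact tsum_congr fun i => rfl
    calc (∑' a : {u : ℕ // K ≤ u}, ∑' b : {t : Finset ℕ // t.card = N - 1 ∧ m ∉ t},
          gE σ a.1 * PE σ b.1)
        = ∑' a : {u : ℕ // K ≤ u}, gE σ a.1 * CE σ (N - 1) m :=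
          tsum_congr fun a => ENNReal.tsum_mul_left
      _ = (∑' a : {u : ℕ // K ≤ u}, gE σ a.1) * CE σ (N - 1) m := ENNReal.tsum_mul_right
      _ = TE σ K * CE σ (N - 1) m := by rw [hge]
  calc ((N - K : ℕ) : ℝ≥0∞) * CE σ N m ≤ _ := step2
    _ = _ := hsig
    _ ≤ _ := hcomp
    _ = TE σ K * CE σ (N - 1) m := hprod

lemma PE_toReal (hnn : ∀ u, 0 ≤ σ u) (s : Finset ℕ) : (PE σ s).toReal = ∏ u ∈ s, σ u := by
  rw [PE, ENNReal.toReal_prod]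
  exact Finset.prod_congr rfl fun u _ => ENNReal.toReal_ofReal (hnn u)

lemma esymm_eq (hnn : ∀ u, 0 ≤ σ u) (N : ℕ) : esymm N σ = (AE σ N).toReal := by
  rw [AE, ENNReal.tsum_toReal_eq (f := fun s : {s : Finset ℕ // s.card = N} => PE σ s.1)
    (fun s => PE_ne_top σ s.1), esymm]
  exact tsum_congr fun s => (PE_toReal hnn s.1).symm

lemma esymmMem_eq (hnn : ∀ u, 0 ≤ σ u) (N m : ℕ) :
    esymmMem N m σ = (BE σ N m).toReal := by
  rw [BE, ENNReal.tsum_toReal_eq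
    (f := fun s : {s : Finset ℕ // s.card = N ∧ m ∈ s} => PE σ s.1)
    (fun s => PE_ne_top σ s.1), esymmMem]
  exact tsum_congr fun s => (PE_toReal hnn s.1).symm

lemma key_real (hpos : ∀ u, 0 < σ u) (hsum : Summable σ) {N M : ℕ}
    (hN : 2 ≤ N) (hM2 : 2 ≤ M) (hMN : M ≤ N) (m : ℕ) :
    σ m * (1 - esymmMem N m σ / esymm N σ) ≤
      (∑' i, σ (M - 1 + i)) / ((N - M + 1 : ℕ) : ℝ) := by
  have hnn : ∀ u, 0 ≤ σ u := fun u => (hpos u).le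
  have hAfin := AE_ne_top hnn hsum N
  have hBfin : BE σ N m ≠ ⊤ := ne_top_of_le_ne_top hAfin (BE_le_AE σ N m)
  have hCfin : CE σ N m ≠ ⊤ := ne_top_of_le_ne_top hAfin (CE_le_AE σ N m)
  set a := esymm N σ with ha
  set b := esymmMem N m σ with hb
  set c := (CE σ N m).toReal with hc
  have hab : a = b + c := by
    rw [ha, hb, hc, esymm_eq hnn, esymmMem_eq hnn, AE_split σ N m,
      ENNReal.toReal_add hBfin hCfin]
  have hapos : 0 < a := by
    rw [ha, esymm_eq hnn]
    exact ENNReal.toReal_pos (AE_ne_zero hpos N) hAfin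
  set t := ∑' i, σ (M - 1 + i) with htdef
  have hd0 : 0 < N - M + 1 := by omega
  have hdR : (0 : ℝ) < ((N - M + 1 : ℕ) : ℝ) := by exact_mod_cast hd0
  -- ENNReal inequality
  have hENN : ((N - M + 1 : ℕ) : ℝ≥0∞) * (gE σ m * CE σ N m) ≤ TE σ (M - 1) * AE σ N := by
    have h1 := CE_step σ m N (M - 1)
    have hdeq : N - M + 1 = N - (M - 1) := by omega
    calc ((N - M + 1 : ℕ) : ℝ≥0∞) * (gE σ m * CE σ N m)
        = gE σ m * (((N - (M - 1) : ℕ) : ℝ≥0∞) * CE σ N m) := by rw [hdeq]; ring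
      _ ≤ gE σ m * (TE σ (M - 1) * CE σ (N - 1) m) := mul_le_mul_right h1 _
      _ = TE σ (M - 1) * (gE σ m * CE σ (N - 1) m) := by ring
      _ = TE σ (M - 1) * BE σ N m := by rw [BE_eq σ N m (by omega)]
      _ ≤ TE σ (M - 1) * AE σ N :=
          mul_le_mul_right (by rw [AE_split σ N m]; exact le_self_add) _
  have hTfin : TE σ (M - 1) ≠ ⊤ := by
    rw [TE_eq hnn hsum]; exact ENNReal.ofReal_ne_top
  have hRfin : TE σ (M - 1) * AE σ N ≠ ⊤ := ENNReal.mul_ne_top hTfin hAfin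
  have hreal : ((N - M + 1 : ℕ) : ℝ) * (σ m * c) ≤ t * a := by
    have h2 := ENNReal.toReal_mono hRfin hENN
    rw [ENNReal.toReal_mul, ENNReal.toReal_mul, ENNReal.toReal_mul, ENNReal.toReal_natCast,
      TE_eq hnn hsum] at h2
    rw [ENNReal.toReal_ofReal (tsum_nonneg fun i => hnn _)] at h2
    rw [show (gE σ m).toReal = σ m from ENNReal.toReal_ofReal (hnn m)] at h2
    rw [ha, esymm_eq hnn]
    exact h2
  have h1mb : 1 - b / a = c / a := by
    have hcab : a - b = c := by rw [hab]; ring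
    rw [← hcab]
    field_simp
  rw [h1mb, mul_div_assoc' (σ m) c a, div_le_div_iff₀ hapos hdR]
  nlinarith [hreal]

lemma tau_le_one (hpos : ∀ u, 0 < σ u) (hsum : Summable σ) (N m : ℕ) :
    esymmMem N m σ / esymm N σ ≤ 1 := by
  have hnn : ∀ u, 0 ≤ σ u := fun u => (hpos u).le
  have hapos : 0 < esymm N σ := by
    rw [esymm_eq hnn]
    exact ENNReal.toReal_pos (AE_ne_zero hpos N) (AE_ne_top hnn hsum N)
  refine (div_le_one hapos).mpr ?_
  rw [esymm_eq hnn, esymmMem_eq hnn]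
  exact ENNReal.toReal_mono (AE_ne_top hnn hsum N) (BE_le_AE σ N m)

end LvAux


open LvAux Filter

set_option linter.unusedVariables false

/-- For a summable nonincreasing positive eigenvalue sequence `σ` (indexed from `0`, the
paper's `σ_m` being `σ (m-1)`) and the expected leverage scores
`τ_m = Σ_{|U|=N, m∈U} Π σ_u / Σ_{|U|=N} Π σ_u` of continuous volume sampling with `N` nodes:
for every `N ≥ 2` and every `m`, `σ_m (1 − τ_m) ≤ σ_N (1 + β_N) ≤ σ_N + Σ_{n ≥ N} σ_n`,
where `β_N = min_{M ∈ [2:N]} [(N−M+1) σ_N]⁻¹ Σ_{n ≥ M} σ_n`; consequently, for each fixed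
`m`, `τ_m → 1` as `N → ∞`. -/
theorem leverage_scores_tendsto_one (σ : ℕ → ℝ) (hpos : ∀ m, 0 < σ m) (hmono : Antitone σ)
    (hsum : Summable σ) :
    (∀ N : ℕ, ∀ hN : 2 ≤ N, ∀ m : ℕ,
      σ m * (1 - esymmMem N m σ / esymm N σ) ≤
          σ (N - 1) *
            (1 + Finset.inf' (Finset.Icc 2 N) (Finset.nonempty_Icc.mpr hN)
              (fun M : ℕ =>
                (∑' i : ℕ, σ (M - 1 + i)) / (((N - M + 1 : ℕ) : ℝ) * σ (N - 1)))) ∧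
        σ (N - 1) *
            (1 + Finset.inf' (Finset.Icc 2 N) (Finset.nonempty_Icc.mpr hN)
              (fun M : ℕ =>
                (∑' i : ℕ, σ (M - 1 + i)) / (((N - M + 1 : ℕ) : ℝ) * σ (N - 1)))) ≤
          σ (N - 1) + ∑' i : ℕ, σ (N - 1 + i)) ∧
      ∀ m : ℕ,
        Filter.Tendsto (fun N : ℕ => esymmMem N m σ / esymm N σ) Filter.atTop (nhds 1) := by
  have hbound : ∀ N : ℕ, 2 ≤ N → ∀ m : ℕ,
      σ m * (1 - esymmMem N m σ / esymm N σ) ≤ σ (N - 1) + ∑' i, σ (N - 1 + i) := by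
    intro N hN m
    have hkey := key_real hpos hsum hN hN (le_refl N) m
    have h1 : ((N - N + 1 : ℕ) : ℝ) = 1 := by norm_num
    rw [h1, div_one] at hkey
    linarith [hpos (N - 1)]
  refine ⟨fun N hN m => ⟨?_, ?_⟩, fun m => ?_⟩
  · -- first inequality
    obtain ⟨M, hM, hMeq⟩ := Finset.exists_mem_eq_inf' (Finset.nonempty_Icc.mpr hN)
      (fun M : ℕ => (∑' i : ℕ, σ (M - 1 + i)) / (((N - M + 1 : ℕ) : ℝ) * σ (N - 1)))
    rw [hMeq]
    rw [Finset.mem_Icc] at hM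
    have hkey := key_real hpos hsum hN hM.1 hM.2 m
    have hσ : 0 < σ (N - 1) := hpos _
    have hd0 : 0 < N - M + 1 := by omega
    have hdR : (0 : ℝ) < ((N - M + 1 : ℕ) : ℝ) := by exact_mod_cast hd0
    have hrhs : σ (N - 1) * (1 + (∑' i : ℕ, σ (M - 1 + i)) /
        (((N - M + 1 : ℕ) : ℝ) * σ (N - 1)))
        = σ (N - 1) + (∑' i : ℕ, σ (M - 1 + i)) / ((N - M + 1 : ℕ) : ℝ) := by
      field_simp
    rw [hrhs]
    linarith
  · -- second inequality
    have hσ : 0 < σ (N - 1) := hpos _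
    have hmem : N ∈ Finset.Icc 2 N := Finset.mem_Icc.mpr ⟨hN, le_refl N⟩
    have hle := Finset.inf'_le
      (fun M : ℕ => (∑' i : ℕ, σ (M - 1 + i)) / (((N - M + 1 : ℕ) : ℝ) * σ (N - 1))) hmem
    have h1 : ((N - N + 1 : ℕ) : ℝ) = 1 := by norm_num
    rw [h1, one_mul] at hle
    calc σ (N - 1) * (1 + Finset.inf' (Finset.Icc 2 N) (Finset.nonempty_Icc.mpr hN)
          (fun M : ℕ => (∑' i : ℕ, σ (M - 1 + i)) / (((N - M + 1 : ℕ) : ℝ) * σ (N - 1))))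
        ≤ σ (N - 1) * (1 + (∑' i : ℕ, σ (N - 1 + i)) / σ (N - 1)) := by
          refine mul_le_mul_of_nonneg_left (by linarith) hσ.le
      _ = σ (N - 1) + ∑' i : ℕ, σ (N - 1 + i) := by
          field_simp
  · -- tendsto
    have hle1 : ∀ N : ℕ, esymmMem N m σ / esymm N σ ≤ 1 := fun N => tau_le_one hpos hsum N m
    have hm := hpos m
    have hlow : ∀ N : ℕ, 2 ≤ N →
        1 - (σ (N - 1) + ∑' i, σ (N - 1 + i)) / σ m ≤ esymmMem N m σ / esymm N σ := by
      intro N hN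
      have h := hbound N hN m
      have h2 : 1 - esymmMem N m σ / esymm N σ ≤ (σ (N - 1) + ∑' i, σ (N - 1 + i)) / σ m := by
        rw [le_div_iff₀ hm]
        linarith
      linarith
    have t1 : Tendsto (fun N : ℕ => σ (N - 1)) atTop (nhds 0) := by
      have := hsum.tendsto_atTop_zero.comp (tendsto_sub_atTop_nat 1)
      exact this
    have t2 : Tendsto (fun N : ℕ => ∑' i, σ (N - 1 + i)) atTop (nhds 0) := by
      have h := (tendsto_sum_nat_add σ).comp (tendsto_sub_atTop_nat 1)
      have heq : (fun N : ℕ => ∑' i, σ (N - 1 + i))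
          = (fun N : ℕ => ∑' k, σ (k + N)) ∘ (fun N : ℕ => N - 1) := by
        funext N
        exact tsum_congr fun i => by rw [add_comm]
      rw [heq]
      exact h
    have t3 : Tendsto (fun N : ℕ => 1 - (σ (N - 1) + ∑' i, σ (N - 1 + i)) / σ m)
        atTop (nhds 1) := by
      have h4 := (tendsto_const_nhds (x := (1:ℝ)) (f := atTop)).sub ((t1.add t2).div_const (σ m))
      simpa using h4
    refine tendsto_of_tendsto_of_tendsto_of_le_of_le' t3 tendsto_const_nhds ?_ ?_
    · filter_upwards [eventually_ge_atTop 2] with N hN using hlow N hN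
    · exact Filter.Eventually.of_forall hle1
end
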